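/- Let H be a finite group and n ≥ 1 an integer. Then n · k(H ≀ C_n) ≥ k(H)^n, i.e. the wreath product H ≀ C_n has at least k(H)^n / n conjugacy classes. -/

import Mathlib

/-- The shift automorphism of `ZMod n → H` by `c : ZMod n`: `(c • f) x = f (x - c)`. -/
def shiftAut (H : Type*) [Group H] (n : ℕ) (c : ZMod n) : MulAut (ZMod n → H) where
  toFun f := fun x => f (x - c)
  invFun f := fun x => f (x + c)
  left_inv f := funext fun x => by simp
  right_inv f := funext fun x => by simp
  map_mul' f g := rfl

/-- The action of the cyclic group `C_n = Multiplicative (ZMod n)` on `ZMod n → H`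
by shifting: `(c • f) x = f (x - c)`. -/
def wreathAction (H : Type*) [Group H] (n : ℕ) :
    Multiplicative (ZMod n) →* MulAut (ZMod n → H) where
  toFun c := shiftAut H n c.toAdd
  map_one' := by
    ext f x
    show f (x - (1 : Multiplicative (ZMod n)).toAdd) = f x
    rw [toAdd_one, sub_zero]
  map_mul' c d := by
    ext f x
    show f (x - (c.toAdd + d.toAdd)) = f (x - c.toAdd - d.toAdd)
    rw [sub_sub]

/-- The wreath product `H ≀ C_n`: the semidirect product `(ZMod n → H) ⋊ C_n`,
where `c ∈ C_n = ZMod n` acts on `f : ZMod n → H` by `(c • f) x = f (x - c)`. -/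
abbrev WreathCyclic (H : Type*) [Group H] (n : ℕ) : Type _ :=
  SemidirectProduct (ZMod n → H) (Multiplicative (ZMod n)) (wreathAction H n)

lemma wreath_key {H : Type*} [Group H] {n : ℕ} {f g : ZMod n → H}
    (h : IsConj (SemidirectProduct.inl f : WreathCyclic H n) (SemidirectProduct.inl g)) :
    ∃ c : ZMod n, IsConj (shiftAut H n c f) g := by
  obtain ⟨u, hu⟩ := h
  have h1 : (u : WreathCyclic H n) * SemidirectProduct.inl f
      = SemidirectProduct.inl g * (u : WreathCyclic H n) := hu
  have h2 := congrArg SemidirectProduct.left h1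
  simp only [SemidirectProduct.mul_left, SemidirectProduct.left_inl,
    SemidirectProduct.right_inl, map_one, MulAut.one_apply] at h2
  refine ⟨(u : WreathCyclic H n).right.toAdd, isConj_iff.mpr
    ⟨(u : WreathCyclic H n).left, ?_⟩⟩
  have : (wreathAction H n) (u : WreathCyclic H n).right f
      = shiftAut H n (u : WreathCyclic H n).right.toAdd f := rfl
  rw [← this, mul_inv_eq_iff_eq_mul]
  exact h2

theorem card_conjClasses_wreathCyclic (H : Type*) [Group H] [Fintype H] (n : ℕ) (hn : 1 ≤ n) :
    Nat.card (ConjClasses H) ^ n ≤ n * Nat.card (ConjClasses (WreathCyclic H n)) := by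
  haveI : NeZero n := ⟨by omega⟩
  classical
  haveI : Finite (WreathCyclic H n) :=
    Finite.of_injective (fun x : WreathCyclic H n => (x.left, x.right))
      (by intro a b h; simp only [Prod.mk.injEq] at h; exact SemidirectProduct.ext h.1 h.2)
  -- Step 1 : k(H)^n ≤ k(H^n)
  have h1 : Nat.card (ConjClasses H) ^ n ≤ Nat.card (ConjClasses (ZMod n → H)) := by
    have e : Nat.card (ZMod n → ConjClasses H) = Nat.card (ConjClasses H) ^ n := by
      rw [Nat.card_fun, Nat.card_zmod]
    rw [← e]
    refine Nat.card_le_card_of_surjective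
      (fun q => Quotient.liftOn q (fun f i => ConjClasses.mk (f i))
        (fun f g hfg => funext fun i => ConjClasses.mk_eq_mk_iff_isConj.mpr
          ((Pi.evalMonoidHom (fun _ => H) i).map_isConj hfg))) ?_
    intro g
    refine ⟨ConjClasses.mk (fun i => (g i).out), funext fun i => ?_⟩
    show ConjClasses.mk (g i).out = g i
    rw [← ConjClasses.quotient_mk_eq_mk]
    exact Quotient.out_eq (g i)
  refine h1.trans ?_
  -- Step 2 : k(H^n) ≤ n * k(W)
  haveI := Fintype.ofFinite (ConjClasses (ZMod n → H))
  haveI := Fintype.ofFinite (ConjClasses (WreathCyclic H n))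
  rw [Nat.card_eq_fintype_card, Nat.card_eq_fintype_card]
  set Φ : ConjClasses (ZMod n → H) → ConjClasses (WreathCyclic H n) :=
    ConjClasses.map SemidirectProduct.inl with hΦ
  have hfib : ∀ b ∈ Finset.univ.image Φ,
      (Finset.univ.filter (fun a => Φ a = b)).card ≤ n := by
    intro b hb
    obtain ⟨a₀, -, ha₀⟩ := Finset.mem_image.mp hb
    obtain ⟨f₀, hf₀⟩ := Quotient.exists_rep a₀
    have hsub : Finset.univ.filter (fun a => Φ a = b) ⊆
        Finset.univ.image (fun c : ZMod n => ConjClasses.mk (shiftAut H n c f₀)) := by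
      intro a ha
      rw [Finset.mem_filter] at ha
      obtain ⟨g, hg⟩ := Quotient.exists_rep a
      have hconj : IsConj (SemidirectProduct.inl f₀ : WreathCyclic H n)
          (SemidirectProduct.inl g) := by
        rw [← ConjClasses.mk_eq_mk_iff_isConj]
        have : Φ a = Φ a₀ := by rw [ha.2, ha₀]
        rw [← hg, ← hf₀] at this
        exact this.symm
      obtain ⟨c, hc⟩ := wreath_key hconj
      refine Finset.mem_image.mpr ⟨c, Finset.mem_univ _, ?_⟩
      calc ConjClasses.mk ((shiftAut H n c) f₀)
          = ConjClasses.mk g := ConjClasses.mk_eq_mk_iff_isConj.mpr hc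
        _ = a := by rw [← ConjClasses.quotient_mk_eq_mk, hg]
    calc (Finset.univ.filter (fun a => Φ a = b)).card
        ≤ _ := Finset.card_le_card hsub
      _ ≤ (Finset.univ : Finset (ZMod n)).card := Finset.card_image_le
      _ = n := by rw [Finset.card_univ, ZMod.card]
  calc Fintype.card (ConjClasses (ZMod n → H))
      = Finset.univ.card := Finset.card_univ.symm
    _ ≤ n * (Finset.univ.image Φ).card := Finset.card_le_mul_card_image _ n hfib
    _ ≤ n * Fintype.card (ConjClasses (WreathCyclic H n)) :=
        Nat.mul_le_mul_left n (Finset.card_le_univ _)
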